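/- The HWSD mechanism is 2-approximately hospital-strategyproof for binary OXS valuations: suppose all hospitals have binary OXS valuations and doctors have strict complete preference orders, and let X be the HWSD-optimal allocation for the true profile. For any hospital h and any binary OXS valuation v', let Y be the HWSD-optimal allocation for the profile in which v_h is replaced by v' (all else unchanged). Then v_h(Y_h) ≤ 2·v_h(X_h). -/

import Mathlib

open Finset

/-- A matroid rank function on subsets of a finite ground set. -/
def IsMRF {α : Type*} [DecidableEq α] (v : Finset α → ℤ) : Prop :=
  v ∅ = 0 ∧
  (∀ (S : Finset α) (d : α), d ∉ S →
    v (insert d S) - v S = 0 ∨ v (insert d S) - v S = 1) ∧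
  (∀ (S T : Finset α) (d : α), S ⊆ T → d ∉ T →
    v (insert d T) - v T ≤ v (insert d S) - v S)

/-- The bundle of doctors assigned to hospital `h` under allocation `X`. -/
def bundle {n m : ℕ} (X : Fin m → Option (Fin n)) (h : Fin n) : Finset (Fin m) :=
  Finset.univ.filter (fun d => X d = some h)

/-- An allocation is non-redundant if every hospital's bundle is independent. -/
def NonRedundant {n m : ℕ} (v : Fin n → Finset (Fin m) → ℤ)
    (X : Fin m → Option (Fin n)) : Prop :=
  ∀ h, v h (bundle X h) = (bundle X h).card

/-- Hospital utilitarian welfare. -/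
def USW {n m : ℕ} (v : Fin n → Finset (Fin m) → ℤ) (X : Fin m → Option (Fin n)) : ℤ :=
  ∑ h, v h (bundle X h)

/-- Doctor `d` strictly prefers the first outcome to the second; every hospital is
strictly preferred to being unallocated (`none`). -/
def OptStrictPref {n m : ℕ} (P : Fin m → Fin n → Fin n → Prop) (d : Fin m) :
    Option (Fin n) → Option (Fin n) → Prop
  | some h, some h' => P d h h'
  | some _, none => True
  | none, _ => False

/-- `(h, S)` is a blocking pair for `X`. -/
def IsBlockingPair {n m : ℕ} (v : Fin n → Finset (Fin m) → ℤ)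
    (P : Fin m → Fin n → Fin n → Prop) (X : Fin m → Option (Fin n))
    (h : Fin n) (S : Finset (Fin m)) : Prop :=
  v h S = S.card ∧ v h (bundle X h) < v h S ∧
    ∀ d ∈ S, X d = some h ∨ OptStrictPref P d (some h) (X d)

/-- An allocation is stable if it is non-redundant and admits no blocking pair. -/
def Stable {n m : ℕ} (v : Fin n → Finset (Fin m) → ℤ)
    (P : Fin m → Fin n → Fin n → Prop) (X : Fin m → Option (Fin n)) : Prop :=
  NonRedundant v X ∧ ¬ ∃ h S, IsBlockingPair v P X h S

/-- The HWSD ordering on non-redundant allocations: `X` beats `Y`. -/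
def HWSDgt {n m : ℕ} (v : Fin n → Finset (Fin m) → ℤ)
    (P : Fin m → Fin n → Fin n → Prop) (X Y : Fin m → Option (Fin n)) : Prop :=
  USW v Y < USW v X ∨
  (USW v X = USW v Y ∧ ∃ j : Fin m,
    OptStrictPref P j (X j) (Y j) ∧ ∀ k : Fin m, k < j → X k = Y k)

/-- `X` is the HWSD-optimal allocation: the greatest non-redundant allocation in the
HWSD ordering (the output of the High Welfare Serial Dictatorship mechanism). -/
def IsHWSDOpt {n m : ℕ} (v : Fin n → Finset (Fin m) → ℤ)
    (P : Fin m → Fin n → Fin n → Prop) (X : Fin m → Option (Fin n)) : Prop :=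
  NonRedundant v X ∧ ∀ Y, NonRedundant v Y → Y ≠ X → HWSDgt v P X Y

/-- A binary OXS valuation: `v S` is the size of a maximum matching of `S` into a
finite set of slots in a bipartite graph. -/
def IsBinaryOXS {α : Type*} (v : Finset α → ℤ) : Prop :=
  ∃ (k : ℕ) (E : α → Fin k → Prop),
    ∀ S : Finset α,
      IsGreatest {r : ℤ | ∃ M : Finset (α × Fin k),
        (∀ p ∈ M, p.1 ∈ S ∧ E p.1 p.2) ∧
        (∀ p ∈ M, ∀ q ∈ M, p.1 = q.1 → p = q) ∧
        (∀ p ∈ M, ∀ q ∈ M, p.2 = q.2 → p = q) ∧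
        (M.card : ℤ) = r} (v S)

set_option linter.unusedSectionVars false

section OXS
variable {α : Type*} [DecidableEq α] [Fintype α]

def OkM {k : ℕ} (E : α → Fin k → Prop) (S : Finset α) (M : Finset (α × Fin k)) : Prop :=
  (∀ p ∈ M, p.1 ∈ S ∧ E p.1 p.2) ∧
  (∀ p ∈ M, ∀ q ∈ M, p.1 = q.1 → p = q) ∧
  (∀ p ∈ M, ∀ q ∈ M, p.2 = q.2 → p = q)

variable {v : Finset α → ℤ} {k : ℕ} {E : α → Fin k → Prop}

def OXSw (v : Finset α → ℤ) {k : ℕ} (E : α → Fin k → Prop) : Prop :=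
  ∀ S : Finset α, IsGreatest {r : ℤ | ∃ M : Finset (α × Fin k),
        (∀ p ∈ M, p.1 ∈ S ∧ E p.1 p.2) ∧
        (∀ p ∈ M, ∀ q ∈ M, p.1 = q.1 → p = q) ∧
        (∀ p ∈ M, ∀ q ∈ M, p.2 = q.2 → p = q) ∧
        (M.card : ℤ) = r} (v S)

theorem oxs_spec (hE : OXSw v E) (S : Finset α) :
    (∃ M, OkM E S M ∧ (M.card : ℤ) = v S) ∧ (∀ M, OkM E S M → (M.card : ℤ) ≤ v S) := by
  obtain ⟨⟨M, h1, h2, h3, h4⟩, hub⟩ := hE S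
  exact ⟨⟨M, ⟨h1, h2, h3⟩, h4⟩, fun M' ⟨g1, g2, g3⟩ => hub ⟨M', g1, g2, g3, rfl⟩⟩

theorem okM_card_eq {S : Finset α} {M : Finset (α × Fin k)}
    (hM : OkM E S M) : (M.image Prod.fst).card = M.card :=
  Finset.card_image_of_injOn (fun p hp q hq hpq => hM.2.1 p hp q hq hpq)

theorem okM_image_subset {S : Finset α} {M : Finset (α × Fin k)}
    (hM : OkM E S M) : M.image Prod.fst ⊆ S := by
  intro d hd
  obtain ⟨p, hp, rfl⟩ := Finset.mem_image.1 hd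
  exact (hM.1 p hp).1

theorem oxs_le_card (hE : OXSw v E) (S : Finset α) : v S ≤ (S.card : ℤ) := by
  obtain ⟨⟨M, hM, hcard⟩, _⟩ := oxs_spec hE S
  rw [← hcard]
  exact_mod_cast Nat.cast_le.2 (le_trans (le_of_eq (okM_card_eq hM).symm)
    (Finset.card_le_card (okM_image_subset hM)))

/-- A slot-assignment function on `S` (edges valid, defined on S, slot-injective) certifies
that `S` is independent. -/
theorem oxs_fun_val (hE : OXSw v E) (S : Finset α) (g : α → Option (Fin k))
    (hsome : ∀ d ∈ S, ∃ s, g d = some s ∧ E d s)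
    (hinj : ∀ d ∈ S, ∀ d' ∈ S, ∀ s, g d = some s → g d' = some s → d = d') :
    v S = (S.card : ℤ) := by
  classical
  set M : Finset (α × Fin k) := (Finset.univ.filter (fun p : α × Fin k =>
    p.1 ∈ S ∧ g p.1 = some p.2)) with hMdef
  have hmem : ∀ p : α × Fin k, p ∈ M ↔ p.1 ∈ S ∧ g p.1 = some p.2 := by
    intro p; simp [hMdef]
  have hOk : OkM E S M := by
    refine ⟨?_, ?_, ?_⟩
    · intro p hp
      obtain ⟨h1, h2⟩ := (hmem p).1 hp
      obtain ⟨s, hs, hEs⟩ := hsome p.1 h1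
      rw [hs] at h2
      refine ⟨h1, ?_⟩
      cases h2; exact hEs
    · intro p hp q hq hpq
      obtain ⟨h1, h2⟩ := (hmem p).1 hp
      obtain ⟨h1', h2'⟩ := (hmem q).1 hq
      rw [hpq] at h2
      rw [h2] at h2'
      exact Prod.ext hpq (by injection h2')
    · intro p hp q hq hpq
      obtain ⟨h1, h2⟩ := (hmem p).1 hp
      obtain ⟨h1', h2'⟩ := (hmem q).1 hq
      have := hinj p.1 h1 q.1 h1' p.2 h2 (by rw [← hpq] at h2'; exact h2')
      exact Prod.ext this hpq
  have hcard : M.card = S.card := by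
    apply Finset.card_bij (fun p _ => p.1)
    · intro p hp; exact ((hmem p).1 hp).1
    · intro p hp q hq hpq; exact hOk.2.1 p hp q hq hpq
    · intro d hd
      obtain ⟨s, hs, _⟩ := hsome d hd
      exact ⟨(d, s), (hmem (d,s)).2 ⟨hd, hs⟩, rfl⟩
  have hle := (oxs_spec hE S).2 M hOk
  have hge := oxs_le_card hE S
  rw [hcard] at hle
  omega

/-- From independence, get a slot-assignment function. -/
theorem oxs_nr_fun (hE : OXSw v E) (S : Finset α) (hS : v S = (S.card : ℤ)) :
    ∃ g : α → Option (Fin k),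
      (∀ d, (g d).isSome ↔ d ∈ S) ∧
      (∀ d s, g d = some s → E d s) ∧
      (∀ d d' s, g d = some s → g d' = some s → d = d') := by
  classical
  obtain ⟨⟨M, hM, hcard⟩, _⟩ := oxs_spec hE S
  have himg : M.image Prod.fst = S := by
    apply Finset.eq_of_subset_of_card_le (okM_image_subset hM)
    rw [okM_card_eq hM]
    omega
  have hfun : ∀ d : α, ∃ o : Option (Fin k),
      (o.isSome ↔ d ∈ S) ∧ (∀ s, o = some s → (d, s) ∈ M) := by
    intro d
    by_cases hd : d ∈ S
    · rw [← himg] at hd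
      obtain ⟨p, hp, hp1⟩ := Finset.mem_image.1 hd
      refine ⟨some p.2, by simp [himg ▸ hd], ?_⟩
      intro s hs
      have : (d, s) = p := by
        have : s = p.2 := by injection hs.symm
        rw [this, ← hp1]
      rw [this]; exact hp
    · exact ⟨none, by simp [hd], by simp⟩
  choose g hg1 hg2 using hfun
  refine ⟨g, hg1, ?_, ?_⟩
  · intro d s hds
    exact (hM.1 (d, s) (hg2 d s hds)).2
  · intro d d' s hd hd'
    have h1 := hg2 d s hd
    have h2 := hg2 d' s hd'
    have := hM.2.2 (d, s) h1 (d', s) h2 rfl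
    exact congrArg Prod.fst this

/-- Subsets of independent sets are independent. -/
theorem oxs_subset (hE : OXSw v E) (S : Finset α) (hS : v S = (S.card : ℤ))
    {S' : Finset α} (hsub : S' ⊆ S) : v S' = (S'.card : ℤ) := by
  obtain ⟨g, hg1, hg2, hg3⟩ := oxs_nr_fun hE S hS
  apply oxs_fun_val hE S' g
  · intro d hd
    have : (g d).isSome := (hg1 d).2 (hsub hd)
    obtain ⟨s, hs⟩ := Option.isSome_iff_exists.1 this
    exact ⟨s, hs, hg2 d s hs⟩
  · intro d _ d' _ s h h'
    exact hg3 d d' s h h'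

end OXS

section Alloc
variable {n m : ℕ}

/-- welfare of a non-redundant allocation equals the number of allocated doctors. -/
theorem usw_eq_card (v : Fin n → Finset (Fin m) → ℤ) (Z : Fin m → Option (Fin n))
    (hZ : NonRedundant v Z) :
    USW v Z = ((Finset.univ.filter (fun e => Z e ≠ none)).card : ℤ) := by
  classical
  have h1 : USW v Z = ((∑ a, (bundle Z a).card : ℕ) : ℤ) := by
    unfold USW
    push_cast
    exact Finset.sum_congr rfl (fun a _ => hZ a)
  rw [h1]
  congr 1
  have h2 := Finset.card_eq_sum_card_fiberwise
    (f := fun e => Z e) (s := Finset.univ.filter (fun e => Z e ≠ none))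
    (t := Finset.univ.image some) (by
      intro x hx
      simp only [Finset.mem_coe, Finset.mem_filter] at hx
      cases hzx : Z x with
      | none => exact absurd hzx hx.2
      | some a => simp [hzx])
  rw [h2, Finset.sum_image (by intro a _ b _ hab; injection hab)]
  apply Finset.sum_congr rfl
  intro a _
  congr 1
  ext e
  simp only [bundle, Finset.mem_filter, Finset.mem_univ, true_and]
  constructor <;> intro h' <;>
    first
      | exact h'.2
      | exact ⟨by rw [h']; simp, h'⟩

theorem patch_card (X Y : Fin m → Option (Fin n)) (Δ : Finset (Fin m)) :
    (Finset.univ.filter (fun e => (if e ∈ Δ then Y e else X e) ≠ none)).card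
    = ((Finset.univ.filter (fun e => X e ≠ none)) \ Δ).card
      + (Δ.filter (fun e => Y e ≠ none)).card := by
  classical
  rw [← Finset.card_union_of_disjoint (by
    rw [Finset.disjoint_left]
    intro e he he'
    simp only [Finset.mem_sdiff] at he
    exact he.2 (Finset.mem_of_mem_filter e he'))]
  congr 1
  ext e
  simp only [Finset.mem_filter, Finset.mem_univ, true_and, Finset.mem_union,
    Finset.mem_sdiff]
  by_cases he : e ∈ Δ <;> simp [he]

theorem card_split_by (s Δ : Finset (Fin m)) :
    s.card = (s \ Δ).card + (Δ.filter (· ∈ s)).card := by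
  classical
  have : Δ.filter (· ∈ s) = s ∩ Δ := by
    ext e; simp only [Finset.mem_filter, Finset.mem_inter]; tauto
  rw [this]
  exact (Finset.card_sdiff_add_card_inter s Δ).symm

theorem osp_irrefl (P : Fin m → Fin n → Fin n → Prop) (hP : ∀ d, IsStrictTotalOrder (Fin n) (P d))
    (e : Fin m) (o : Option (Fin n)) (h : OptStrictPref P e o o) : False := by
  cases o with
  | none => exact h
  | some a => exact (hP e).irrefl a h

theorem osp_asymm (P : Fin m → Fin n → Fin n → Prop) (hP : ∀ d, IsStrictTotalOrder (Fin n) (P d))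
    (e : Fin m) (o o' : Option (Fin n))
    (h : OptStrictPref P e o o') (h' : OptStrictPref P e o' o) : False := by
  cases o with
  | none => exact h
  | some a => cases o' with
    | none => exact h'
    | some b => exact (hP e).irrefl a ((hP e).trans a b a h h')

/-- The mirror lemma: if swapping a set `Δ` of doctors between their `X`- and
`Y`-positions preserves non-redundancy and welfare on both sides, we get a
contradiction with HWSD-optimality of both `X` and `Y`. -/
theorem mirror (v₁ v₂ : Fin n → Finset (Fin m) → ℤ) (P : Fin m → Fin n → Fin n → Prop)
    (hP : ∀ d, IsStrictTotalOrder (Fin n) (P d)) (X Y : Fin m → Option (Fin n))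
    (hX : IsHWSDOpt v₁ P X) (hY : IsHWSDOpt v₂ P Y) (Δ : Finset (Fin m))
    (hne : ∃ e ∈ Δ, X e ≠ Y e)
    (hA : NonRedundant v₁ (fun e => if e ∈ Δ then Y e else X e))
    (hUA : USW v₁ (fun e => if e ∈ Δ then Y e else X e) = USW v₁ X)
    (hB : NonRedundant v₂ (fun e => if e ∈ Δ then X e else Y e))
    (hUB : USW v₂ (fun e => if e ∈ Δ then X e else Y e) = USW v₂ Y) : False := by
  classical
  set A := (fun e => if e ∈ Δ then Y e else X e) with hAdef
  set B := (fun e => if e ∈ Δ then X e else Y e) with hBdef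
  set D := Δ.filter (fun e => X e ≠ Y e) with hDdef
  have hDne : D.Nonempty := by
    obtain ⟨e, he, hne'⟩ := hne
    exact ⟨e, by simp [hDdef, he, hne']⟩
  set w := D.min' hDne with hwdef
  have hwD : w ∈ D := D.min'_mem hDne
  have hwΔ : w ∈ Δ := Finset.mem_of_mem_filter w hwD
  have hwne : X w ≠ Y w := by
    have := (Finset.mem_filter.1 hwD).2; exact this
  have hmin : ∀ k, k < w → X k = Y k ∨ k ∉ Δ := by
    intro k hk
    by_cases hkΔ : k ∈ Δ
    · by_cases hkne : X k = Y k
      · exact Or.inl hkne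
      · exfalso
        have : k ∈ D := by simp [hDdef, hkΔ, hkne]
        exact absurd (D.min'_le k this) (by exact not_le.2 hk)
    · exact Or.inr hkΔ
  -- X-side
  have hAX : A ≠ X := by
    intro hcontra
    apply hwne
    have := congrFun hcontra w
    simp only [hAdef, if_pos hwΔ] at this
    exact this.symm
  have h1 := hX.2 A hA hAX
  have hosp1 : OptStrictPref P w (X w) (Y w) := by
    rcases h1 with h1 | ⟨_, j, hj1, hj2⟩
    · omega
    · have hjw : j = w := by
        by_contra hjw
        rcases lt_or_gt_of_ne hjw with hlt | hgt
        · -- j < w : then X j = A j, so OptStrictPref P j (X j) (X j): contradiction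
          apply osp_irrefl P hP j (X j)
          have : A j = X j := by
            simp only [hAdef]
            by_cases hjΔ : j ∈ Δ
            · rcases hmin j hlt with h' | h'
              · simp [hjΔ, h'.symm]
              · exact absurd hjΔ h'
            · simp [hjΔ]
          rw [← this] at hj1 ⊢
          exact hj1
        · -- w < j: then X w = A w forced by hj2, but A w = Y w ≠ X w
          have := hj2 w hgt
          simp only [hAdef, if_pos hwΔ] at this
          exact hwne this
      rw [hjw] at hj1
      simpa only [hAdef, if_pos hwΔ] using hj1
  -- Y-side
  have hBY : B ≠ Y := by
    intro hcontra
    apply hwne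
    have := congrFun hcontra w
    simp only [hBdef, if_pos hwΔ] at this
    exact this
  have h2 := hY.2 B hB hBY
  have hosp2 : OptStrictPref P w (Y w) (X w) := by
    rcases h2 with h2 | ⟨_, j, hj1, hj2⟩
    · omega
    · have hjw : j = w := by
        by_contra hjw
        rcases lt_or_gt_of_ne hjw with hlt | hgt
        · apply osp_irrefl P hP j (Y j)
          have : B j = Y j := by
            simp only [hBdef]
            by_cases hjΔ : j ∈ Δ
            · rcases hmin j hlt with h' | h'
              · simp [hjΔ, h']
              · exact absurd hjΔ h'
            · simp [hjΔ]
          rw [← this] at hj1 ⊢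
          exact hj1
        · have := hj2 w hgt
          simp only [hBdef, if_pos hwΔ] at this
          exact hwne this.symm
      rw [hjw] at hj1
      simpa only [hBdef, if_pos hwΔ] using hj1
  exact osp_asymm P hP w (X w) (Y w) hosp1 hosp2
end Alloc

section Walk
variable {α : Type*} [DecidableEq α] [Fintype α]
variable (next : α → Option α)

/-- iterates of a partial map -/
def nseq (d : α) : ℕ → Option α := fun i => (fun o => o.bind next)^[i] (some d)

theorem nseq_zero (d : α) : nseq next d 0 = some d := rfl

theorem nseq_succ (d : α) (i : ℕ) :
    nseq next d (i + 1) = (nseq next d i).bind next := by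
  unfold nseq
  rw [Function.iterate_succ_apply']

variable {next}

theorem nseq_succ_elim {d e : α} {i : ℕ} (h : nseq next d (i + 1) = some e) :
    ∃ w, nseq next d i = some w ∧ next w = some e := by
  rw [nseq_succ] at h
  cases hw : nseq next d i with
  | none => rw [hw] at h; simp at h
  | some w => rw [hw] at h; exact ⟨w, rfl, h⟩

theorem nseq_cross (hinj : ∀ w w' e, next w = some e → next w' = some e → w = w')
    {d d' : α} (hd : ∀ w, next w ≠ some d) (hd' : ∀ w, next w ≠ some d')
    {j j' : ℕ} {e : α} (h : nseq next d j = some e) (h' : nseq next d' j' = some e) :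
    d = d' ∧ j = j' := by
  induction j generalizing j' e with
  | zero =>
    rw [nseq_zero] at h
    cases j' with
    | zero =>
      rw [nseq_zero] at h'
      refine ⟨?_, rfl⟩
      rw [← Option.some_inj, h, h']
    | succ k =>
      obtain ⟨w, _, hw2⟩ := nseq_succ_elim h'
      exfalso
      apply hd w
      rw [hw2, ← h]
  | succ i ih =>
    cases j' with
    | zero =>
      rw [nseq_zero] at h'
      obtain ⟨w, _, hw2⟩ := nseq_succ_elim h
      exfalso
      apply hd' w
      rw [hw2, h']
    | succ k =>
      obtain ⟨w, hw1, hw2⟩ := nseq_succ_elim h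
      obtain ⟨w', hw1', hw2'⟩ := nseq_succ_elim h'
      have : w = w' := hinj w w' e hw2 hw2'
      rw [this] at hw1
      obtain ⟨h1, h2⟩ := ih hw1 hw1'
      exact ⟨h1, by omega⟩

/-- within one walk, indices with the same value coincide -/
theorem nseq_inj (hinj : ∀ w w' e, next w = some e → next w' = some e → w = w')
    {d : α} (hd : ∀ w, next w ≠ some d)
    {i j : ℕ} {e : α} (h : nseq next d i = some e) (h' : nseq next d j = some e) : i = j :=
  (nseq_cross hinj hd hd h h').2

/-- termination: some iterate is terminal -/
theorem nseq_term (hinj : ∀ w w' e, next w = some e → next w' = some e → w = w')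
    {d : α} (hd : ∀ w, next w ≠ some d) :
    ∃ jt et, nseq next d jt = some et ∧ next et = none ∧
      ∀ i, i ≤ jt → (nseq next d i).isSome := by
  classical
  have hnone : ∃ i, nseq next d i = none := by
    by_contra hc
    push_neg at hc
    have hsome : ∀ i, (nseq next d i).isSome := by
      intro i
      cases h : nseq next d i with
      | none => exact absurd h (hc i)
      | some e => simp
    set f : Fin (Fintype.card α + 1) → α := fun i => (nseq next d i).get (hsome i) with hf
    have hfinj : Function.Injective f := by
      intro i j hij
      have hi : nseq next d i = some (f i) := by simp [hf]
      have hj : nseq next d j = some (f j) := by simp [hf]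
      rw [hij] at hi
      exact Fin.ext (nseq_inj hinj hd hi hj)
    have := Fintype.card_le_of_injective f hfinj
    simp at this
  set i₀ := Nat.find hnone with hi₀
  have hi₀none : nseq next d i₀ = none := Nat.find_spec hnone
  have hi₀pos : i₀ ≠ 0 := by
    intro hc
    rw [hc, nseq_zero] at hi₀none
    exact Option.some_ne_none d hi₀none
  obtain ⟨jt, hjt⟩ := Nat.exists_eq_succ_of_ne_zero hi₀pos
  have hlt : ∀ i, i ≤ jt → (nseq next d i).isSome := by
    intro i hi
    cases h : nseq next d i with
    | none =>
      exfalso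
      have hile : i₀ ≤ i := Nat.find_le h
      omega
    | some e => simp
  obtain ⟨et, het⟩ := Option.isSome_iff_exists.1 (hlt jt le_rfl)
  refine ⟨jt, et, het, ?_, hlt⟩
  have : nseq next d (jt + 1) = none := by
    have : jt + 1 = i₀ := by omega
    rw [this]; exact hi₀none
  rw [nseq_succ, het] at this
  exact this

end Walk

section WalkContra
variable {n m : ℕ}

theorem walk_contra
    (v : Fin n → Finset (Fin m) → ℤ) (P : Fin m → Fin n → Fin n → Prop)
    (hP : ∀ d, IsStrictTotalOrder (Fin n) (P d))
    (h : Fin n) (v' : Finset (Fin m) → ℤ)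
    (X Y : Fin m → Option (Fin n))
    (hX : IsHWSDOpt v P X) (hY : IsHWSDOpt (Function.update v h v') P Y)
    (k : Fin n → ℕ) (E : ∀ a, Fin m → Fin (k a) → Prop)
    (hE : ∀ a, OXSw (v a) (E a))
    (k' : ℕ) (E' : Fin m → Fin k' → Prop) (hE' : OXSw v' E')
    (fX : ∀ a, Fin m → Option (Fin (k a)))
    (hfX1 : ∀ a d, (fX a d).isSome ↔ d ∈ bundle X a)
    (hfX2 : ∀ a d s, fX a d = some s → E a d s)
    (hfX3 : ∀ a d d' s, fX a d = some s → fX a d' = some s → d = d')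
    (fY : ∀ a, Fin m → Option (Fin (k a)))
    (hfY1 : ∀ a, a ≠ h → ∀ d, (fY a d).isSome ↔ d ∈ bundle Y a)
    (hfY2 : ∀ a, a ≠ h → ∀ d s, fY a d = some s → E a d s)
    (hfY3 : ∀ a, a ≠ h → ∀ d d' s, fY a d = some s → fY a d' = some s → d = d')
    (fT : Fin m → Option (Fin (k h))) (T : Finset (Fin m))
    (hfT1 : ∀ d, (fT d).isSome ↔ d ∈ T)
    (hfT2 : ∀ d s, fT d = some s → E h d s)
    (hTsub : T ⊆ bundle Y h)
    (Δ : Finset (Fin m)) (d : Fin m)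
    (hdT : d ∈ T) (hdΔ : d ∈ Δ)
    (hdfree : ∀ e s, fT d = some s → fX h e ≠ some s)
    (hYsome : ∀ e ∈ Δ, Y e ≠ none)
    (hΔYh : ∀ e ∈ Δ, Y e = some h → e = d)
    (hC3 : ∀ e ∈ Δ, X e ≠ some h)
    (hC4 : ∀ e ∈ Δ, ∀ a s e', X e = some a → a ≠ h → fX a e = some s →
      fY a e' = some s → e' ∈ Δ)
    (hC5 : ∀ e ∈ Δ, ∀ a s e', X e' = some a → a ≠ h → fX a e' = some s →
      fY a e = some s → e' ∈ Δ) :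
    False := by
  classical
  set A := (fun e => if e ∈ Δ then Y e else X e) with hAdef
  set B := (fun e => if e ∈ Δ then X e else Y e) with hBdef
  have hYd : Y d = some h := (Finset.mem_filter.1 (hTsub hdT)).2
  have hXd : X d ≠ some h := hC3 d hdΔ
  have hmemA : ∀ a e, e ∈ bundle A a ↔ (e ∈ Δ ∧ Y e = some a) ∨ (e ∉ Δ ∧ X e = some a) := by
    intro a e
    simp only [bundle, Finset.mem_filter, Finset.mem_univ, true_and, hAdef]
    by_cases he : e ∈ Δ <;> simp [he]
  have hmemB : ∀ a e, e ∈ bundle B a ↔ (e ∈ Δ ∧ X e = some a) ∨ (e ∉ Δ ∧ Y e = some a) := by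
    intro a e
    simp only [bundle, Finset.mem_filter, Finset.mem_univ, true_and, hBdef]
    by_cases he : e ∈ Δ <;> simp [he]
  -- Non-redundancy of A
  have hAnr : NonRedundant v A := by
    intro b
    by_cases hb : b = h
    · rw [hb]
      apply oxs_fun_val (hE h) _ (fun e => if e = d then fT e else fX h e)
      · intro e he
        rcases (hmemA h e).1 he with ⟨h1, h2⟩ | ⟨h1, h2⟩
        · have hed : e = d := hΔYh e h1 h2
          subst hed
          obtain ⟨s, hs⟩ := Option.isSome_iff_exists.1 ((hfT1 e).2 hdT)
          exact ⟨s, by simp [hs], hfT2 e s hs⟩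
        · have hed : e ≠ d := by rintro rfl; exact hXd h2
          obtain ⟨s, hs⟩ := Option.isSome_iff_exists.1 ((hfX1 h e).2 (by
            simp [bundle, h2]))
          exact ⟨s, by simp [hed, hs], hfX2 h e s hs⟩
      · intro e he e' he' s hs hs'
        by_cases h1 : e = d <;> by_cases h2 : e' = d
        · rw [h1, h2]
        · exfalso
          rw [if_pos h1] at hs
          rw [if_neg h2] at hs'
          rw [h1] at hs
          exact hdfree e' s hs hs'
        · exfalso
          rw [if_neg h1] at hs
          rw [if_pos h2] at hs'
          rw [h2] at hs'
          exact hdfree e s hs' hs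
        · rw [if_neg h1] at hs
          rw [if_neg h2] at hs'
          exact hfX3 h e e' s hs hs'
    · apply oxs_fun_val (hE b) _ (fun e => if e ∈ Δ then fY b e else fX b e)
      · intro e he
        rcases (hmemA b e).1 he with ⟨h1, h2⟩ | ⟨h1, h2⟩
        · obtain ⟨s, hs⟩ := Option.isSome_iff_exists.1 ((hfY1 b hb e).2 (by
            simp [bundle, h2]))
          exact ⟨s, by simp [h1, hs], hfY2 b hb e s hs⟩
        · obtain ⟨s, hs⟩ := Option.isSome_iff_exists.1 ((hfX1 b e).2 (by
            simp [bundle, h2]))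
          exact ⟨s, by simp [h1, hs], hfX2 b e s hs⟩
      · intro e he e' he' s hs hs'
        by_cases h1 : e ∈ Δ <;> by_cases h2 : e' ∈ Δ
        · rw [if_pos h1] at hs; rw [if_pos h2] at hs'
          exact hfY3 b hb e e' s hs hs'
        · exfalso
          rw [if_pos h1] at hs; rw [if_neg h2] at hs'
          rcases (hmemA b e').1 he' with ⟨hh, _⟩ | ⟨_, hh⟩
          · exact h2 hh
          · exact h2 (hC5 e h1 b s e' hh hb hs' hs)
        · exfalso
          rw [if_neg h1] at hs; rw [if_pos h2] at hs'
          rcases (hmemA b e).1 he with ⟨hh, _⟩ | ⟨_, hh⟩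
          · exact h1 hh
          · exact h1 (hC5 e' h2 b s e hh hb hs hs')
        · rw [if_neg h1] at hs; rw [if_neg h2] at hs'
          exact hfX3 b e e' s hs hs'
  -- welfare accounting for A
  have hfilΔY : Δ.filter (fun e => Y e ≠ none) = Δ := Finset.filter_true_of_mem hYsome
  have hUA : USW v A = ((((Finset.univ.filter (fun e => X e ≠ none)) \ Δ).card
      + Δ.card : ℕ) : ℤ) := by
    rw [usw_eq_card v A hAnr]
    rw [hAdef]
    rw [patch_card X Y Δ, hfilΔY]
  have hUX : USW v X = ((((Finset.univ.filter (fun e => X e ≠ none)) \ Δ).card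
      + (Δ.filter (fun e => X e ≠ none)).card : ℕ) : ℤ) := by
    have hfil : Δ.filter (fun e => e ∈ Finset.univ.filter (fun e => X e ≠ none))
        = Δ.filter (fun e => X e ≠ none) := by
      ext e
      simp [Finset.mem_filter]
    rw [usw_eq_card v X hX.1,
      card_split_by (Finset.univ.filter (fun e => X e ≠ none)) Δ, hfil]
  have hcle : (Δ.filter (fun e => X e ≠ none)).card ≤ Δ.card := Finset.card_filter_le _ _
  rcases lt_or_eq_of_le hcle with hlt | heq
  · -- strict welfare gain for the X-side: contradiction
    have hex : ∃ e ∈ Δ, X e = none := by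
      by_contra hc
      push_neg at hc
      have : Δ.filter (fun e => X e ≠ none) = Δ :=
        Finset.filter_true_of_mem (fun e he => hc e he)
      rw [this] at hlt
      omega
    obtain ⟨e0, he0, hXe0⟩ := hex
    have hAX : A ≠ X := by
      intro hcontra
      have := congrFun hcontra e0
      rw [hAdef] at this
      simp only [if_pos he0] at this
      rw [hXe0] at this
      exact hYsome e0 he0 this
    have := hX.2 A hAnr hAX
    rcases this with h' | ⟨h', _⟩ <;> (rw [hUA, hUX] at h'; omega)
  · -- equal welfare: use the mirror lemma
    have hfilΔX : Δ.filter (fun e => X e ≠ none) = Δ :=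
      Finset.eq_of_subset_of_card_le (Finset.filter_subset _ _) (le_of_eq heq.symm)
    have hallX : ∀ e ∈ Δ, X e ≠ none := by
      intro e he
      have : e ∈ Δ.filter (fun e => X e ≠ none) := by rw [hfilΔX]; exact he
      exact (Finset.mem_filter.1 this).2
    have hUAX : USW v A = USW v X := by rw [hUA, hUX, hfilΔX]
    -- Non-redundancy of B
    have hBnr : NonRedundant (Function.update v h v') B := by
      intro b
      by_cases hb : b = h
      · subst hb
        have hbun : bundle B b = (bundle Y b) \ {d} := by
          ext e
          rw [hmemB b e]
          simp only [Finset.mem_sdiff, Finset.mem_singleton, bundle, Finset.mem_filter,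
            Finset.mem_univ, true_and]
          constructor
          · rintro (⟨h1, h2⟩ | ⟨h1, h2⟩)
            · exact absurd h2 (hC3 e h1)
            · refine ⟨h2, ?_⟩
              rintro rfl
              exact h1 hdΔ
          · rintro ⟨h1, h2⟩
            refine Or.inr ⟨?_, h1⟩
            intro he
            exact h2 (hΔYh e he h1)
        rw [hbun]
        have hvy : v' (bundle Y b) = ((bundle Y b).card : ℤ) := by
          have := hY.1 b
          rwa [Function.update_self] at this
        have := oxs_subset hE' (bundle Y b) hvy (Finset.sdiff_subset (t := {d}))
        rw [Function.update_self]
        exact this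
      · rw [Function.update_of_ne hb]
        apply oxs_fun_val (hE b) _ (fun e => if e ∈ Δ then fX b e else fY b e)
        · intro e he
          rcases (hmemB b e).1 he with ⟨h1, h2⟩ | ⟨h1, h2⟩
          · obtain ⟨s, hs⟩ := Option.isSome_iff_exists.1 ((hfX1 b e).2 (by
              simp [bundle, h2]))
            exact ⟨s, by simp [h1, hs], hfX2 b e s hs⟩
          · obtain ⟨s, hs⟩ := Option.isSome_iff_exists.1 ((hfY1 b hb e).2 (by
              simp [bundle, h2]))
            exact ⟨s, by simp [h1, hs], hfY2 b hb e s hs⟩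
        · intro e he e' he' s hs hs'
          by_cases h1 : e ∈ Δ <;> by_cases h2 : e' ∈ Δ
          · rw [if_pos h1] at hs; rw [if_pos h2] at hs'
            exact hfX3 b e e' s hs hs'
          · exfalso
            rw [if_pos h1] at hs; rw [if_neg h2] at hs'
            rcases (hmemB b e).1 he with ⟨_, hh⟩ | ⟨hh, _⟩
            · exact h2 (hC4 e h1 b s e' hh hb hs hs')
            · exact hh h1
          · exfalso
            rw [if_neg h1] at hs; rw [if_pos h2] at hs'
            rcases (hmemB b e').1 he' with ⟨_, hh⟩ | ⟨hh, _⟩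
            · exact h1 (hC4 e' h2 b s e hh hb hs' hs)
            · exact hh h2
          · rw [if_neg h1] at hs; rw [if_neg h2] at hs'
            exact hfY3 b hb e e' s hs hs'
    -- welfare accounting for B
    have hUB : USW (Function.update v h v') B = USW (Function.update v h v') Y := by
      rw [usw_eq_card _ B hBnr, usw_eq_card _ Y hY.1]
      rw [hBdef]
      rw [patch_card Y X Δ, hfilΔX]
      have hfil : Δ.filter (fun e => e ∈ Finset.univ.filter (fun e => Y e ≠ none))
          = Δ.filter (fun e => Y e ≠ none) := by
        ext e
        simp [Finset.mem_filter]
      rw [card_split_by (Finset.univ.filter (fun e => Y e ≠ none)) Δ, hfil, hfilΔY]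
    exact mirror v (Function.update v h v') P hP X Y hX hY Δ
      ⟨d, hdΔ, by rw [hYd]; exact hXd⟩ hAnr hUAX hBnr hUB

end WalkContra

/-- Theorem 3.5: the HWSD mechanism is 2-approximately hospital-strategyproof when
hospitals have binary OXS valuations. -/
theorem hwsd_two_approx_hospital_sp {n m : ℕ} (v : Fin n → Finset (Fin m) → ℤ)
    (P : Fin m → Fin n → Fin n → Prop)
    (hv : ∀ h, IsBinaryOXS (v h)) (hP : ∀ d, IsStrictTotalOrder (Fin n) (P d))
    (h : Fin n) (v' : Finset (Fin m) → ℤ) (hv' : IsBinaryOXS v')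
    (X Y : Fin m → Option (Fin n))
    (hX : IsHWSDOpt v P X) (hY : IsHWSDOpt (Function.update v h v') P Y) :
    v h (bundle Y h) ≤ 2 * v h (bundle X h) := by
  classical
  choose k E hE using hv
  obtain ⟨k', E', hE'⟩ := hv'
  -- slot functions for X
  have hfX0 : ∀ a, ∃ g : Fin m → Option (Fin (k a)),
      (∀ d, (g d).isSome ↔ d ∈ bundle X a) ∧ (∀ d s, g d = some s → E a d s) ∧
      (∀ d d' s, g d = some s → g d' = some s → d = d') := by
    intro a
    exact oxs_nr_fun (hE a) (bundle X a) (hX.1 a)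
  choose fX hfX1 hfX2 hfX3 using hfX0
  -- slot functions for Y away from h
  have hfY0 : ∀ a, ∃ g : Fin m → Option (Fin (k a)), a ≠ h →
      ((∀ d, (g d).isSome ↔ d ∈ bundle Y a) ∧ (∀ d s, g d = some s → E a d s) ∧
      (∀ d d' s, g d = some s → g d' = some s → d = d')) := by
    intro a
    by_cases ha : a = h
    · exact ⟨fun _ => none, fun h' => absurd ha h'⟩
    · have hnra : v a (bundle Y a) = ((bundle Y a).card : ℤ) := by
        have := hY.1 a
        rwa [Function.update_of_ne ha] at this
      obtain ⟨g, h1, h2, h3⟩ := oxs_nr_fun (hE a) _ hnra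
      exact ⟨g, fun _ => ⟨h1, h2, h3⟩⟩
  choose fY hfY using hfY0
  have hfY1 : ∀ a, a ≠ h → ∀ d, ((fY a d).isSome ↔ d ∈ bundle Y a) :=
    fun a ha => (hfY a ha).1
  have hfY2 : ∀ a, a ≠ h → ∀ d s, fY a d = some s → E a d s :=
    fun a ha => (hfY a ha).2.1
  have hfY3 : ∀ a, a ≠ h → ∀ d d' s, fY a d = some s → fY a d' = some s → d = d' :=
    fun a ha => (hfY a ha).2.2
  -- maximum matching of Y's bundle at h under the true valuation
  obtain ⟨⟨MT, hMT, hMTcard⟩, _⟩ := oxs_spec (hE h) (bundle Y h)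
  set T := MT.image Prod.fst with hTdef
  have hTsub : T ⊆ bundle Y h := okM_image_subset hMT
  have hTcard : (T.card : ℤ) = v h (bundle Y h) := by
    rw [hTdef, okM_card_eq hMT]; exact hMTcard
  have hMT_T : OkM (E h) T MT :=
    ⟨fun p hp => ⟨Finset.mem_image_of_mem _ hp, (hMT.1 p hp).2⟩, hMT.2.1, hMT.2.2⟩
  have hTind : v h T = (T.card : ℤ) := by
    have h1 := (oxs_spec (hE h) T).2 MT hMT_T
    have h2 := oxs_le_card (hE h) T
    have h3 : T.card = MT.card := okM_card_eq hMT
    omega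
  obtain ⟨fT, hfT1, hfT2, hfT3⟩ := oxs_nr_fun (hE h) T hTind
  -- the successor map of the exchange walk
  set Nxt : Fin m → Fin m → Prop := fun w e =>
    ∃ a s, X w = some a ∧ a ≠ h ∧ fX a w = some s ∧ fY a e = some s with hNxtdef
  set next : Fin m → Option (Fin m) := fun w =>
    if hc : ∃ e, Nxt w e then some (Classical.choose hc) else none with hnextdef
  have hNxtY : ∀ w e, Nxt w e → ∃ a, a ≠ h ∧ Y e = some a := by
    rintro w e ⟨a, s, _, ha, _, hfy⟩
    have : e ∈ bundle Y a := (hfY1 a ha e).1 (by rw [hfy]; rfl)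
    exact ⟨a, ha, (Finset.mem_filter.1 this).2⟩
  have hnext_some : ∀ w e, next w = some e ↔ Nxt w e := by
    intro w e
    constructor
    · intro hne
      have hne' : (if hc : ∃ e, Nxt w e then some (Classical.choose hc) else none)
          = some e := hne
      by_cases hc : ∃ e, Nxt w e
      · rw [dif_pos hc] at hne'
        have := Classical.choose_spec hc
        have he : Classical.choose hc = e := by injection hne'
        rwa [he] at this
      · rw [dif_neg hc] at hne'
        exact absurd hne' (by simp)
    · intro hN
      have hc : ∃ e, Nxt w e := ⟨e, hN⟩
      show (if hc : ∃ e, Nxt w e then some (Classical.choose hc) else none) = some e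
      rw [dif_pos hc]
      congr 1
      have hN' := Classical.choose_spec hc
      -- uniqueness
      obtain ⟨a, s, hXw, ha, hfx, hfy⟩ := hN'
      obtain ⟨a', s', hXw', ha', hfx', hfy'⟩ := hN
      have haa : a = a' := by rw [hXw] at hXw'; injection hXw'
      subst haa
      have hss : s = s' := by rw [hfx] at hfx'; injection hfx'
      subst hss
      exact hfY3 a ha _ e s hfy hfy'
  have hnext_inj : ∀ w w' e, next w = some e → next w' = some e → w = w' := by
    intro w w' e hw hw'
    obtain ⟨a, s, hXw, ha, hfx, hfy⟩ := (hnext_some w e).1 hw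
    obtain ⟨a', s', hXw', ha', hfx', hfy'⟩ := (hnext_some w' e).1 hw'
    have h1 : Y e = some a :=
      (Finset.mem_filter.1 ((hfY1 a ha e).1 (by rw [hfy]; rfl))).2
    have h2 : Y e = some a' :=
      (Finset.mem_filter.1 ((hfY1 a' ha' e).1 (by rw [hfy']; rfl))).2
    rw [h1] at h2
    have haa : a = a' := by injection h2
    subst haa
    have hss : s = s' := by
      rw [hfy] at hfy'
      injection hfy'
    subst hss
    exact hfX3 a w w' s hfx hfx'
  have hstartT : ∀ d ∈ T, ∀ w, next w ≠ some d := by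
    intro d hd w hc
    obtain ⟨a, ha, hYd⟩ := hNxtY w d ((hnext_some w d).1 hc)
    have hYdh : Y d = some h := (Finset.mem_filter.1 (hTsub hd)).2
    rw [hYdh] at hYd
    have : h = a := by injection hYd
    exact ha this.symm
  -- every "free-slot" doctor's walk terminates at a doctor of X's bundle at h
  -- that is not in Y's bundle at h
  have hwalk : ∀ d ∈ T, X d ≠ some h → (∀ e s, fT d = some s → fX h e ≠ some s) →
      ∃ et jt, nseq next d jt = some et ∧ et ∈ bundle X h ∧ et ∉ bundle Y h := by
    intro d hdT hXd hfree
    obtain ⟨jt, et, hjt, hterm, hall⟩ := nseq_term hnext_inj (hstartT d hdT)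
    set Δ : Finset (Fin m) :=
      Finset.univ.filter (fun e => ∃ i, i ≤ jt ∧ nseq next d i = some e) with hΔdef
    have hΔmem : ∀ e, e ∈ Δ ↔ ∃ i, i ≤ jt ∧ nseq next d i = some e := by
      intro e; simp [hΔdef]
    have hdΔ : d ∈ Δ := (hΔmem d).2 ⟨0, Nat.zero_le _, nseq_zero next d⟩
    have hYdh : Y d = some h := (Finset.mem_filter.1 (hTsub hdT)).2
    -- interior elements have a successor inside Δ
    have hint : ∀ e, e ∈ Δ → e ≠ et → ∃ u, next e = some u ∧ u ∈ Δ := by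
      intro e heΔ hne
      obtain ⟨i, hi, hseq⟩ := (hΔmem e).1 heΔ
      have hilt : i < jt := by
        rcases lt_or_eq_of_le hi with hlt | heq'
        · exact hlt
        · exfalso
          rw [heq'] at hseq
          rw [hseq] at hjt
          injection hjt with hh
          exact hne hh
      obtain ⟨u, hu⟩ := Option.isSome_iff_exists.1 (hall (i+1) (by omega))
      obtain ⟨w, hw1, hw2⟩ := nseq_succ_elim hu
      have hwe : w = e := by
        rw [hseq] at hw1
        injection hw1 with hh
        exact hh.symm
      rw [hwe] at hw2
      exact ⟨u, hw2, (hΔmem u).2 ⟨i+1, by omega, hu⟩⟩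
    -- elements other than d are hit by `next`, hence lie in some Y-bundle ≠ h
    have hYfact : ∀ e, e ∈ Δ → e ≠ d → ∃ a, a ≠ h ∧ Y e = some a := by
      intro e heΔ hne
      obtain ⟨i, hi, hseq⟩ := (hΔmem e).1 heΔ
      cases i with
      | zero =>
        exfalso
        rw [nseq_zero] at hseq
        injection hseq with hh
        exact hne hh.symm
      | succ i' =>
        obtain ⟨w, hw1, hw2⟩ := nseq_succ_elim hseq
        exact hNxtY w e ((hnext_some w e).1 hw2)
    have hYnone : ∀ e ∈ Δ, Y e ≠ none := by
      intro e heΔ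
      by_cases hne : e = d
      · rw [hne, hYdh]; simp
      · obtain ⟨a, _, hYe⟩ := hYfact e heΔ hne
        rw [hYe]; simp
    have hΔYh : ∀ e ∈ Δ, Y e = some h → e = d := by
      intro e heΔ hYe
      by_contra hne
      obtain ⟨a, ha, hYe'⟩ := hYfact e heΔ hne
      rw [hYe] at hYe'
      injection hYe' with hh
      exact ha hh.symm
    by_cases hXet : X et = some h
    · -- the charge case
      refine ⟨et, jt, hjt, by simp [bundle, hXet], ?_⟩
      have hetd : et ≠ d := by
        intro hc
        rw [hc] at hXet
        exact hXd hXet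
      obtain ⟨a, ha, hYet⟩ := hYfact et ((hΔmem et).2 ⟨jt, le_rfl, hjt⟩) hetd
      simp only [bundle, Finset.mem_filter, Finset.mem_univ, true_and]
      rw [hYet]
      intro hc
      injection hc with hh
      exact ha hh
    · -- otherwise : contradiction via walk_contra
      exfalso
      have hC3 : ∀ e ∈ Δ, X e ≠ some h := by
        intro e heΔ hXe
        by_cases hee : e = et
        · rw [hee] at hXe; exact hXet hXe
        · obtain ⟨u, hu, _⟩ := hint e heΔ hee
          obtain ⟨a, s, hXw, ha, _, _⟩ := (hnext_some e u).1 hu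
          rw [hXe] at hXw
          injection hXw with hh
          exact ha hh.symm
      have hC4 : ∀ e ∈ Δ, ∀ a s e', X e = some a → a ≠ h → fX a e = some s →
          fY a e' = some s → e' ∈ Δ := by
        intro e heΔ a s e' hXe ha hfx hfy
        have hN : Nxt e e' := ⟨a, s, hXe, ha, hfx, hfy⟩
        have hne : next e = some e' := (hnext_some e e').2 hN
        by_cases hee : e = et
        · exfalso
          rw [hee] at hne
          rw [hterm] at hne
          exact absurd hne (by simp)
        · obtain ⟨u, hu, huΔ⟩ := hint e heΔ hee
          rw [hne] at hu
          injection hu with hh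
          rw [hh]
          exact huΔ
      have hC5 : ∀ e ∈ Δ, ∀ a s e', X e' = some a → a ≠ h → fX a e' = some s →
          fY a e = some s → e' ∈ Δ := by
        intro e heΔ a s e' hXe' ha hfx hfy
        have hne : next e' = some e := (hnext_some e' e).2 ⟨a, s, hXe', ha, hfx, hfy⟩
        obtain ⟨i, hi, hseq⟩ := (hΔmem e).1 heΔ
        cases i with
        | zero =>
          exfalso
          rw [nseq_zero] at hseq
          injection hseq with hh
          rw [hh.symm] at hne
          exact hstartT d hdT e' hne
        | succ i' =>
          obtain ⟨w, hw1, hw2⟩ := nseq_succ_elim hseq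
          have : e' = w := hnext_inj e' w e hne hw2
          rw [this]
          exact (hΔmem w).2 ⟨i', by omega, hw1⟩
      exact walk_contra v P hP h v' X Y hX hY k E hE k' E' hE' fX hfX1 hfX2 hfX3
        fY hfY1 hfY2 hfY3 fT T hfT1 hfT2 hTsub Δ d hdT hdΔ hfree hYnone hΔYh hC3 hC4 hC5
  -- Final counting
  rw [← hTcard, hX.1 h]
  suffices hN : T.card ≤ 2 * (bundle X h).card by exact_mod_cast hN
  set p1 : Fin m → Prop := fun e => ∃ e' s, fT e = some s ∧ fX h e' = some s with hp1def
  set T' := T.filter (fun e => ¬ X e = some h) with hT'def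
  have hsplit0 : (T.filter (fun e => X e = some h)).card + T'.card = T.card :=
    Finset.card_filter_add_card_filter_not (p := fun e => X e = some h)
  have hsplit1 : (T'.filter p1).card + (T'.filter (fun e => ¬ p1 e)).card = T'.card :=
    Finset.card_filter_add_card_filter_not (p := p1)
  -- bound 0
  have hb0 : (T.filter (fun e => X e = some h)).card ≤ (bundle X h ∩ bundle Y h).card := by
    apply Finset.card_le_card
    intro e he
    obtain ⟨heT, hXe⟩ := Finset.mem_filter.1 he
    exact Finset.mem_inter.2 ⟨by simp [bundle, hXe], hTsub heT⟩
  -- bound 1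
  have hb1 : (T'.filter p1).card ≤ (bundle X h).card := by
    have hch : ∀ e : Fin m, ∃ e', e ∈ T'.filter p1 →
        (e' ∈ bundle X h ∧ ∃ s, fT e = some s ∧ fX h e' = some s) := by
      intro e
      by_cases he : e ∈ T'.filter p1
      · obtain ⟨_, e', s, hfTe, hfXe⟩ := Finset.mem_filter.1 he
        refine ⟨e', fun _ => ⟨(hfX1 h e').1 (by rw [hfXe]; rfl), s, hfTe, hfXe⟩⟩
      · exact ⟨e, fun hc => absurd hc he⟩
    choose ch hch' using hch
    apply Finset.card_le_card_of_injOn ch (fun e he => (hch' e he).1)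
    intro e1 h1 e2 h2 heq
    obtain ⟨_, s1, hT1, hX1'⟩ := hch' e1 h1
    obtain ⟨_, s2, hT2, hX2'⟩ := hch' e2 h2
    rw [heq] at hX1'
    rw [hX1'] at hX2'
    injection hX2' with hss
    rw [hss] at hT1
    exact hfT3 e1 e2 s2 hT1 hT2
  -- bound 2
  have hb2 : (T'.filter (fun e => ¬ p1 e)).card ≤ ((bundle X h) \ (bundle Y h)).card := by
    have hmem2 : ∀ e, e ∈ T'.filter (fun e => ¬ p1 e) →
        e ∈ T ∧ X e ≠ some h ∧ ∀ e' s, fT e = some s → fX h e' ≠ some s := by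
      intro e he
      obtain ⟨heT', hnp⟩ := Finset.mem_filter.1 he
      obtain ⟨heT, hXe⟩ := Finset.mem_filter.1 heT'
      refine ⟨heT, hXe, ?_⟩
      intro e' s hTs hXs
      exact hnp ⟨e', s, hTs, hXs⟩
    have hch2 : ∀ e : Fin m, ∃ q : Fin m × ℕ, e ∈ T'.filter (fun e => ¬ p1 e) →
        (nseq next e q.2 = some q.1 ∧ q.1 ∈ bundle X h ∧ q.1 ∉ bundle Y h) := by
      intro e
      by_cases he : e ∈ T'.filter (fun e => ¬ p1 e)
      · obtain ⟨heT, hXe, hfree⟩ := hmem2 e he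
        obtain ⟨et, jt, h1, h2, h3⟩ := hwalk e heT hXe hfree
        exact ⟨(et, jt), fun _ => ⟨h1, h2, h3⟩⟩
      · exact ⟨(e, 0), fun hc => absurd hc he⟩
    choose ch2 hch2' using hch2
    apply Finset.card_le_card_of_injOn (fun e => (ch2 e).1) (fun e he =>
      Finset.mem_sdiff.2 ⟨(hch2' e he).2.1, (hch2' e he).2.2⟩)
    intro e1 h1 e2 h2 heq
    obtain ⟨hn1, _, _⟩ := hch2' e1 h1
    obtain ⟨hn2, _, _⟩ := hch2' e2 h2
    simp only at heq
    rw [heq] at hn1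
    exact (nseq_cross hnext_inj (hstartT e1 (hmem2 e1 h1).1) (hstartT e2 (hmem2 e2 h2).1)
      hn1 hn2).1
  have hXBsplit : (bundle X h ∩ bundle Y h).card + (bundle X h \ bundle Y h).card
      = (bundle X h).card := Finset.card_inter_add_card_sdiff _ _
  omega
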